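/- For every h ∈ H and every b ∈ B the adjoint action ad_h(b) := i(h₁) · b · i(κ_H(h₂)) again belongs to B, and ad is a left action: ad_{hh'}(b) = ad_h(ad_{h'}(b)) and ad_{1_H}(b) = b. Moreover, for every b ∈ B, the element (π ⊗ id_A)(Δ(b)) lies in the submodule H ⊗ B of H ⊗ A. -/

import Mathlib

open TensorProduct

/-- The projection `Π : A → A` defined by `Π(a) = a₁ · i(κ_H(π(a₂)))` (Sweedler notation),
for bialgebra homomorphisms `π : A → H` and `i : H → A`. -/
noncomputable def PiMap (K : Type*) {A H : Type*} [CommRing K] [Ring A] [Ring H]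
    [HopfAlgebra K A] [HopfAlgebra K H]
    (π : A →ₐc[K] H) (i : H →ₐc[K] A) : A →ₗ[K] A :=
  (LinearMap.mul' K A) ∘ₗ
    (TensorProduct.map LinearMap.id
      ((i : H →ₗ[K] A) ∘ₗ (HopfAlgebra.antipode (R := K) (A := H)) ∘ₗ (π : A →ₗ[K] H))) ∘ₗ
    (Coalgebra.comul (R := K) (A := A))

/-- The adjoint action `ad_h(b) = i(h₁) · b · i(κ_H(h₂))` (Sweedler notation). -/
noncomputable def adAct (K : Type*) {A H : Type*} [CommRing K] [Ring A] [Ring H]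
    [HopfAlgebra K A] [HopfAlgebra K H]
    (i : H →ₐc[K] A) (h : H) (b : A) : A :=
  (LinearMap.mul' K A)
    ((LinearMap.lTensor A (LinearMap.mul' K A))
      ((LinearMap.lTensor A ((TensorProduct.mk K A A) b))
        ((TensorProduct.map (i : H →ₗ[K] A)
            ((i : H →ₗ[K] A) ∘ₗ (HopfAlgebra.antipode (R := K) (A := H))))
          (Coalgebra.comul (R := K) h))))


open TensorProduct

namespace HopfAux

variable {K : Type*} [CommRing K]
variable {C : Type*} [AddCommGroup C] [Module K C]
variable {C' : Type*} [AddCommGroup C'] [Module K C']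
variable {B : Type*} [Ring B] [Algebra K B]
variable {B' : Type*} [Ring B'] [Algebra K B']

/-- convolution product -/
noncomputable def conv (Δc : C →ₗ[K] C ⊗[K] C) (f g : C →ₗ[K] B) : C →ₗ[K] B :=
  LinearMap.mul' K B ∘ₗ TensorProduct.map f g ∘ₗ Δc

/-- convolution unit -/
noncomputable def cunit (εc : C →ₗ[K] K) : C →ₗ[K] B := Algebra.linearMap K B ∘ₗ εc

lemma conv_apply_of_eq (Δc : C →ₗ[K] C ⊗[K] C) (f g : C →ₗ[K] B) (c : C)
    {ι : Type*} (s : Finset ι) (x y : ι → C) (h : Δc c = ∑ t ∈ s, x t ⊗ₜ[K] y t) :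
    conv Δc f g c = ∑ t ∈ s, f (x t) * g (y t) := by
  simp [conv, h]

lemma cunit_apply (εc : C →ₗ[K] K) (c : C) : (cunit εc (B := B)) c = algebraMap K B (εc c) := rfl

section assoc
variable (Δc : C →ₗ[K] C ⊗[K] C) (εc : C →ₗ[K] K)

include Δc in
lemma conv_assoc
    (hco : (TensorProduct.assoc K C C C).toLinearMap ∘ₗ
      TensorProduct.map Δc LinearMap.id ∘ₗ Δc = TensorProduct.map LinearMap.id Δc ∘ₗ Δc)
    (f g h : C →ₗ[K] B) :
    conv Δc (conv Δc f g) h = conv Δc f (conv Δc g h) := by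
  have hco' : TensorProduct.map Δc LinearMap.id ∘ₗ Δc =
      (TensorProduct.assoc K C C C).symm.toLinearMap ∘ₗ
        (TensorProduct.map LinearMap.id Δc ∘ₗ Δc) := by
    rw [← hco]; ext c; simp
  have key : LinearMap.mul' K B ∘ₗ
        TensorProduct.map (LinearMap.mul' K B ∘ₗ TensorProduct.map f g) h ∘ₗ
        (TensorProduct.assoc K C C C).symm.toLinearMap =
      LinearMap.mul' K B ∘ₗ TensorProduct.map f (LinearMap.mul' K B ∘ₗ TensorProduct.map g h) := by
    ext x y z
    simp [mul_assoc]
  have e1 : TensorProduct.map (LinearMap.mul' K B ∘ₗ TensorProduct.map f g ∘ₗ Δc) h =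
      TensorProduct.map (LinearMap.mul' K B ∘ₗ TensorProduct.map f g) h ∘ₗ
        TensorProduct.map Δc LinearMap.id := by
    rw [← TensorProduct.map_comp, LinearMap.comp_id]; exact rfl
  have e2 : TensorProduct.map f (LinearMap.mul' K B ∘ₗ TensorProduct.map g h ∘ₗ Δc) =
      TensorProduct.map f (LinearMap.mul' K B ∘ₗ TensorProduct.map g h) ∘ₗ
        TensorProduct.map LinearMap.id Δc := by
    rw [← TensorProduct.map_comp, LinearMap.comp_id]; exact rfl
  calc conv Δc (conv Δc f g) h
      = LinearMap.mul' K B ∘ₗ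
          TensorProduct.map (LinearMap.mul' K B ∘ₗ TensorProduct.map f g ∘ₗ Δc) h ∘ₗ Δc := rfl
    _ = (LinearMap.mul' K B ∘ₗ
          TensorProduct.map (LinearMap.mul' K B ∘ₗ TensorProduct.map f g) h) ∘ₗ
          (TensorProduct.map Δc LinearMap.id ∘ₗ Δc) := by rw [e1]; exact rfl
    _ = (LinearMap.mul' K B ∘ₗ
          TensorProduct.map (LinearMap.mul' K B ∘ₗ TensorProduct.map f g) h ∘ₗ
          (TensorProduct.assoc K C C C).symm.toLinearMap) ∘ₗ
          (TensorProduct.map LinearMap.id Δc ∘ₗ Δc) := by rw [hco']; exact rfl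
    _ = (LinearMap.mul' K B ∘ₗ
          TensorProduct.map f (LinearMap.mul' K B ∘ₗ TensorProduct.map g h)) ∘ₗ
          (TensorProduct.map LinearMap.id Δc ∘ₗ Δc) := by rw [key]
    _ = LinearMap.mul' K B ∘ₗ
          TensorProduct.map f (LinearMap.mul' K B ∘ₗ TensorProduct.map g h ∘ₗ Δc) ∘ₗ Δc := by
          rw [e2]; exact rfl
    _ = conv Δc f (conv Δc g h) := rfl

lemma cunit_conv
    (hl : TensorProduct.map εc LinearMap.id ∘ₗ Δc = TensorProduct.mk K K C 1)
    (f : C →ₗ[K] B) : conv Δc (cunit εc) f = f := by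
  have e1 : TensorProduct.map (Algebra.linearMap K B ∘ₗ εc) f =
      TensorProduct.map (Algebra.linearMap K B) f ∘ₗ TensorProduct.map εc LinearMap.id := by
    rw [← TensorProduct.map_comp, LinearMap.comp_id]
  calc conv Δc (cunit εc) f
      = LinearMap.mul' K B ∘ₗ TensorProduct.map (Algebra.linearMap K B ∘ₗ εc) f ∘ₗ Δc := rfl
    _ = (LinearMap.mul' K B ∘ₗ TensorProduct.map (Algebra.linearMap K B) f) ∘ₗ
          (TensorProduct.map εc LinearMap.id ∘ₗ Δc) := by rw [e1]; exact rfl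
    _ = (LinearMap.mul' K B ∘ₗ TensorProduct.map (Algebra.linearMap K B) f) ∘ₗ
          TensorProduct.mk K K C 1 := by rw [hl]
    _ = f := by ext c; simp [Algebra.algebraMap_eq_smul_one]

lemma conv_cunit
    (hr : TensorProduct.map LinearMap.id εc ∘ₗ Δc = (TensorProduct.mk K C K).flip 1)
    (f : C →ₗ[K] B) : conv Δc f (cunit εc) = f := by
  have e1 : TensorProduct.map f (Algebra.linearMap K B ∘ₗ εc) =
      TensorProduct.map f (Algebra.linearMap K B) ∘ₗ TensorProduct.map LinearMap.id εc := by
    rw [← TensorProduct.map_comp, LinearMap.comp_id]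
  calc conv Δc f (cunit εc)
      = LinearMap.mul' K B ∘ₗ TensorProduct.map f (Algebra.linearMap K B ∘ₗ εc) ∘ₗ Δc := rfl
    _ = (LinearMap.mul' K B ∘ₗ TensorProduct.map f (Algebra.linearMap K B)) ∘ₗ
          (TensorProduct.map LinearMap.id εc ∘ₗ Δc) := by rw [e1]; exact rfl
    _ = (LinearMap.mul' K B ∘ₗ TensorProduct.map f (Algebra.linearMap K B)) ∘ₗ
          (TensorProduct.mk K C K).flip 1 := by rw [hr]
    _ = f := by ext c; simp [Algebra.algebraMap_eq_smul_one]

lemma conv_inv_unique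
    (hco : (TensorProduct.assoc K C C C).toLinearMap ∘ₗ
      TensorProduct.map Δc LinearMap.id ∘ₗ Δc = TensorProduct.map LinearMap.id Δc ∘ₗ Δc)
    (hl : TensorProduct.map εc LinearMap.id ∘ₗ Δc = TensorProduct.mk K K C 1)
    (hr : TensorProduct.map LinearMap.id εc ∘ₗ Δc = (TensorProduct.mk K C K).flip 1)
    (f g g' : C →ₗ[K] B)
    (h1 : conv Δc g f = cunit εc) (h2 : conv Δc f g' = cunit εc) : g = g' := by
  have : conv Δc g (conv Δc f g') = conv Δc (conv Δc g f) g' := (conv_assoc Δc hco g f g').symm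
  rw [h1, h2, conv_cunit Δc εc hr, cunit_conv Δc εc hl] at this
  exact this

end assoc

/-- composing with an algebra homomorphism on the left distributes over convolution -/
lemma alghom_comp_conv (Δc : C →ₗ[K] C ⊗[K] C) (j : B →ₐ[K] B') (p q : C →ₗ[K] B) :
    j.toLinearMap ∘ₗ conv Δc p q = conv Δc (j.toLinearMap ∘ₗ p) (j.toLinearMap ∘ₗ q) := by
  have h : j.toLinearMap ∘ₗ LinearMap.mul' K B ∘ₗ TensorProduct.map p q =
      LinearMap.mul' K B' ∘ₗ TensorProduct.map (j.toLinearMap ∘ₗ p) (j.toLinearMap ∘ₗ q) := by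
    ext x y; simp
  exact congrArg (fun m => m ∘ₗ Δc) h

/-- composing with a coalgebra homomorphism on the right distributes over convolution -/
lemma conv_comp_coalghom (Δc : C →ₗ[K] C ⊗[K] C) (Δc' : C' →ₗ[K] C' ⊗[K] C')
    (g : C' →ₗ[K] C) (hg : Δc ∘ₗ g = TensorProduct.map g g ∘ₗ Δc') (p q : C →ₗ[K] B) :
    conv Δc p q ∘ₗ g = conv Δc' (p ∘ₗ g) (q ∘ₗ g) := by
  calc conv Δc p q ∘ₗ g
      = LinearMap.mul' K B ∘ₗ TensorProduct.map p q ∘ₗ (Δc ∘ₗ g) := rfl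
    _ = LinearMap.mul' K B ∘ₗ (TensorProduct.map p q ∘ₗ TensorProduct.map g g) ∘ₗ Δc' := by
        rw [hg]; exact rfl
    _ = conv Δc' (p ∘ₗ g) (q ∘ₗ g) := by rw [← TensorProduct.map_comp]; rfl

lemma mulLeft_comp_conv (Δc : C →ₗ[K] C ⊗[K] C) (z : B) (p q : C →ₗ[K] B) :
    LinearMap.mulLeft K z ∘ₗ conv Δc p q = conv Δc (LinearMap.mulLeft K z ∘ₗ p) q := by
  have h : LinearMap.mulLeft K z ∘ₗ LinearMap.mul' K B ∘ₗ TensorProduct.map p q =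
      LinearMap.mul' K B ∘ₗ TensorProduct.map (LinearMap.mulLeft K z ∘ₗ p) q := by
    ext x y; simp [mul_assoc]
  exact congrArg (fun m => m ∘ₗ Δc) h

lemma mulRight_comp_conv (Δc : C →ₗ[K] C ⊗[K] C) (z : B) (p q : C →ₗ[K] B) :
    LinearMap.mulRight K z ∘ₗ conv Δc p q = conv Δc p (LinearMap.mulRight K z ∘ₗ q) := by
  have h : LinearMap.mulRight K z ∘ₗ LinearMap.mul' K B ∘ₗ TensorProduct.map p q =
      LinearMap.mul' K B ∘ₗ TensorProduct.map p (LinearMap.mulRight K z ∘ₗ q) := by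
    ext x y; simp [mul_assoc]
  exact congrArg (fun m => m ∘ₗ Δc) h

lemma conv_mulRight_eq_mulLeft (Δc : C →ₗ[K] C ⊗[K] C) (z : B) (p q : C →ₗ[K] B) :
    conv Δc (LinearMap.mulRight K z ∘ₗ p) q = conv Δc p (LinearMap.mulLeft K z ∘ₗ q) := by
  have h : LinearMap.mul' K B ∘ₗ TensorProduct.map (LinearMap.mulRight K z ∘ₗ p) q =
      LinearMap.mul' K B ∘ₗ TensorProduct.map p (LinearMap.mulLeft K z ∘ₗ q) := by
    ext x y; simp [mul_assoc]
  exact congrArg (fun m => m ∘ₗ Δc) h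

end HopfAux

namespace HopfAux2
open TensorProduct HopfAux
variable {K : Type*} [CommRing K]

lemma map_comp_fst {C C' X Y Z : Type*} [AddCommGroup C] [Module K C] [AddCommGroup C']
    [Module K C'] [AddCommGroup X] [Module K X] [AddCommGroup Y] [Module K Y]
    [AddCommGroup Z] [Module K Z]
    (q : X →ₗ[K] Y) (x : C →ₗ[K] X) (h : C' →ₗ[K] Z) :
    TensorProduct.map (q ∘ₗ x) h = TensorProduct.map q h ∘ₗ TensorProduct.map x LinearMap.id := by
  ext c z; simp

lemma map_comp_snd {C C' X Y Z : Type*} [AddCommGroup C] [Module K C] [AddCommGroup C']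
    [Module K C'] [AddCommGroup X] [Module K X] [AddCommGroup Y] [Module K Y]
    [AddCommGroup Z] [Module K Z]
    (h : C →ₗ[K] Z) (q : X →ₗ[K] Y) (x : C' →ₗ[K] X) :
    TensorProduct.map h (q ∘ₗ x) = TensorProduct.map h q ∘ₗ TensorProduct.map LinearMap.id x := by
  ext c z; simp

variable {H : Type*} [Ring H] [HopfAlgebra K H]

noncomputable def Δ2 (K H : Type*) [CommRing K] [Ring H] [HopfAlgebra K H] :
    (H ⊗[K] H) →ₗ[K] (H ⊗[K] H) ⊗[K] (H ⊗[K] H) :=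
  (TensorProduct.tensorTensorTensorComm K H H H H).toLinearMap ∘ₗ
    TensorProduct.map (Coalgebra.comul) (Coalgebra.comul)

noncomputable def ε2 (K H : Type*) [CommRing K] [Ring H] [HopfAlgebra K H] :
    (H ⊗[K] H) →ₗ[K] K :=
  LinearMap.mul' K K ∘ₗ TensorProduct.map (Coalgebra.counit) (Coalgebra.counit)

set_option maxHeartbeats 1000000 in
lemma hco2 : (TensorProduct.assoc K (H ⊗[K] H) (H ⊗[K] H) (H ⊗[K] H)).toLinearMap ∘ₗ
    TensorProduct.map (Δ2 K H) LinearMap.id ∘ₗ Δ2 K H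
    = TensorProduct.map LinearMap.id (Δ2 K H) ∘ₗ Δ2 K H := by
  have co' : TensorProduct.map (Coalgebra.comul (R := K) (A := H)) LinearMap.id ∘ₗ
      Coalgebra.comul = (TensorProduct.assoc K H H H).symm.toLinearMap ∘ₗ
        (TensorProduct.map LinearMap.id (Coalgebra.comul (R := K) (A := H)) ∘ₗ
          Coalgebra.comul) :=
    LinearMap.ext fun c => (Coalgebra.coassoc_symm_apply c).symm
  have n1 : TensorProduct.map
        (TensorProduct.map (Coalgebra.comul (R := K) (A := H)) Coalgebra.comul)
        (LinearMap.id (M := H ⊗[K] H)) ∘ₗ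
      (TensorProduct.tensorTensorTensorComm K H H H H).toLinearMap =
      (TensorProduct.tensorTensorTensorComm K (H ⊗[K] H) H (H ⊗[K] H) H).toLinearMap ∘ₗ
        TensorProduct.map
          (TensorProduct.map (Coalgebra.comul (R := K) (A := H)) LinearMap.id)
          (TensorProduct.map (Coalgebra.comul (R := K) (A := H)) LinearMap.id) := by
    ext x y p q
    simp
  have n2 : TensorProduct.map (LinearMap.id (M := H ⊗[K] H))
        (TensorProduct.map (Coalgebra.comul (R := K) (A := H)) Coalgebra.comul) ∘ₗ
      (TensorProduct.tensorTensorTensorComm K H H H H).toLinearMap =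
      (TensorProduct.tensorTensorTensorComm K H (H ⊗[K] H) H (H ⊗[K] H)).toLinearMap ∘ₗ
        TensorProduct.map
          (TensorProduct.map LinearMap.id (Coalgebra.comul (R := K) (A := H)))
          (TensorProduct.map LinearMap.id (Coalgebra.comul (R := K) (A := H))) := by
    ext x y p q
    simp
  have S : (TensorProduct.assoc K (H ⊗[K] H) (H ⊗[K] H) (H ⊗[K] H)).toLinearMap ∘ₗ
      TensorProduct.map (TensorProduct.tensorTensorTensorComm K H H H H).toLinearMap
        (LinearMap.id (M := H ⊗[K] H)) ∘ₗ
      (TensorProduct.tensorTensorTensorComm K (H ⊗[K] H) H (H ⊗[K] H) H).toLinearMap ∘ₗ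
      TensorProduct.map (TensorProduct.assoc K H H H).symm.toLinearMap
        (TensorProduct.assoc K H H H).symm.toLinearMap =
      TensorProduct.map (LinearMap.id (M := H ⊗[K] H))
        (TensorProduct.tensorTensorTensorComm K H H H H).toLinearMap ∘ₗ
      (TensorProduct.tensorTensorTensorComm K H (H ⊗[K] H) H (H ⊗[K] H)).toLinearMap := by
    ext x₁ x₂ x₃ y₁ y₂ y₃
    simp
  have left : (TensorProduct.assoc K (H ⊗[K] H) (H ⊗[K] H) (H ⊗[K] H)).toLinearMap ∘ₗ
      TensorProduct.map (Δ2 K H) LinearMap.id ∘ₗ Δ2 K H =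
      (TensorProduct.map (LinearMap.id (M := H ⊗[K] H))
        (TensorProduct.tensorTensorTensorComm K H H H H).toLinearMap ∘ₗ
      (TensorProduct.tensorTensorTensorComm K H (H ⊗[K] H) H (H ⊗[K] H)).toLinearMap) ∘ₗ
      TensorProduct.map
        (TensorProduct.map LinearMap.id (Coalgebra.comul (R := K) (A := H)) ∘ₗ
          Coalgebra.comul)
        (TensorProduct.map LinearMap.id (Coalgebra.comul (R := K) (A := H)) ∘ₗ
          Coalgebra.comul) := by
    calc (TensorProduct.assoc K (H ⊗[K] H) (H ⊗[K] H) (H ⊗[K] H)).toLinearMap ∘ₗ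
        TensorProduct.map (Δ2 K H) LinearMap.id ∘ₗ Δ2 K H
        = (TensorProduct.assoc K (H ⊗[K] H) (H ⊗[K] H) (H ⊗[K] H)).toLinearMap ∘ₗ
          TensorProduct.map (TensorProduct.tensorTensorTensorComm K H H H H).toLinearMap
            LinearMap.id ∘ₗ
          (TensorProduct.map
            (TensorProduct.map (Coalgebra.comul (R := K) (A := H)) Coalgebra.comul)
            LinearMap.id ∘ₗ
          (TensorProduct.tensorTensorTensorComm K H H H H).toLinearMap) ∘ₗ
          TensorProduct.map (Coalgebra.comul) (Coalgebra.comul) := by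
          rw [Δ2, map_comp_fst (TensorProduct.tensorTensorTensorComm K H H H H).toLinearMap
            (TensorProduct.map (Coalgebra.comul (R := K) (A := H)) Coalgebra.comul)
            (LinearMap.id (M := H ⊗[K] H))]
          exact rfl
      _ = (TensorProduct.assoc K (H ⊗[K] H) (H ⊗[K] H) (H ⊗[K] H)).toLinearMap ∘ₗ
          TensorProduct.map (TensorProduct.tensorTensorTensorComm K H H H H).toLinearMap
            LinearMap.id ∘ₗ
          (TensorProduct.tensorTensorTensorComm K (H ⊗[K] H) H (H ⊗[K] H) H).toLinearMap ∘ₗ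
          TensorProduct.map
            (TensorProduct.map (Coalgebra.comul (R := K) (A := H)) LinearMap.id ∘ₗ
              Coalgebra.comul)
            (TensorProduct.map (Coalgebra.comul (R := K) (A := H)) LinearMap.id ∘ₗ
              Coalgebra.comul) := by
          rw [n1, TensorProduct.map_comp
            (TensorProduct.map (Coalgebra.comul (R := K) (A := H)) LinearMap.id)
            (TensorProduct.map (Coalgebra.comul (R := K) (A := H)) LinearMap.id)
            (Coalgebra.comul)
            (Coalgebra.comul)]
          exact rfl
      _ = (TensorProduct.assoc K (H ⊗[K] H) (H ⊗[K] H) (H ⊗[K] H)).toLinearMap ∘ₗ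
          TensorProduct.map (TensorProduct.tensorTensorTensorComm K H H H H).toLinearMap
            LinearMap.id ∘ₗ
          (TensorProduct.tensorTensorTensorComm K (H ⊗[K] H) H (H ⊗[K] H) H).toLinearMap ∘ₗ
          TensorProduct.map (TensorProduct.assoc K H H H).symm.toLinearMap
            (TensorProduct.assoc K H H H).symm.toLinearMap ∘ₗ
          TensorProduct.map
            (TensorProduct.map LinearMap.id (Coalgebra.comul (R := K) (A := H)) ∘ₗ
              Coalgebra.comul)
            (TensorProduct.map LinearMap.id (Coalgebra.comul (R := K) (A := H)) ∘ₗ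
              Coalgebra.comul) := by
          rw [co', TensorProduct.map_comp
            (TensorProduct.assoc K H H H).symm.toLinearMap
            (TensorProduct.assoc K H H H).symm.toLinearMap
            (TensorProduct.map LinearMap.id (Coalgebra.comul (R := K) (A := H)) ∘ₗ
              Coalgebra.comul)
            (TensorProduct.map LinearMap.id (Coalgebra.comul (R := K) (A := H)) ∘ₗ
              Coalgebra.comul)]
      _ = ((TensorProduct.assoc K (H ⊗[K] H) (H ⊗[K] H) (H ⊗[K] H)).toLinearMap ∘ₗ
          TensorProduct.map (TensorProduct.tensorTensorTensorComm K H H H H).toLinearMap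
            LinearMap.id ∘ₗ
          (TensorProduct.tensorTensorTensorComm K (H ⊗[K] H) H (H ⊗[K] H) H).toLinearMap ∘ₗ
          TensorProduct.map (TensorProduct.assoc K H H H).symm.toLinearMap
            (TensorProduct.assoc K H H H).symm.toLinearMap) ∘ₗ
          TensorProduct.map
            (TensorProduct.map LinearMap.id (Coalgebra.comul (R := K) (A := H)) ∘ₗ
              Coalgebra.comul)
            (TensorProduct.map LinearMap.id (Coalgebra.comul (R := K) (A := H)) ∘ₗ
              Coalgebra.comul) := rfl
      _ = _ := by rw [S]
  have right : TensorProduct.map LinearMap.id (Δ2 K H) ∘ₗ Δ2 K H =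
      (TensorProduct.map (LinearMap.id (M := H ⊗[K] H))
        (TensorProduct.tensorTensorTensorComm K H H H H).toLinearMap ∘ₗ
      (TensorProduct.tensorTensorTensorComm K H (H ⊗[K] H) H (H ⊗[K] H)).toLinearMap) ∘ₗ
      TensorProduct.map
        (TensorProduct.map LinearMap.id (Coalgebra.comul (R := K) (A := H)) ∘ₗ
          Coalgebra.comul)
        (TensorProduct.map LinearMap.id (Coalgebra.comul (R := K) (A := H)) ∘ₗ
          Coalgebra.comul) := by
    calc TensorProduct.map LinearMap.id (Δ2 K H) ∘ₗ Δ2 K H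
        = TensorProduct.map (LinearMap.id (M := H ⊗[K] H))
            (TensorProduct.tensorTensorTensorComm K H H H H).toLinearMap ∘ₗ
          (TensorProduct.map LinearMap.id
            (TensorProduct.map (Coalgebra.comul (R := K) (A := H)) Coalgebra.comul) ∘ₗ
          (TensorProduct.tensorTensorTensorComm K H H H H).toLinearMap) ∘ₗ
          TensorProduct.map (Coalgebra.comul) (Coalgebra.comul) := by
          rw [Δ2, map_comp_snd (LinearMap.id (M := H ⊗[K] H))
            (TensorProduct.tensorTensorTensorComm K H H H H).toLinearMap
            (TensorProduct.map (Coalgebra.comul (R := K) (A := H)) Coalgebra.comul)]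
          exact rfl
      _ = TensorProduct.map (LinearMap.id (M := H ⊗[K] H))
            (TensorProduct.tensorTensorTensorComm K H H H H).toLinearMap ∘ₗ
          (TensorProduct.tensorTensorTensorComm K H (H ⊗[K] H) H (H ⊗[K] H)).toLinearMap ∘ₗ
          TensorProduct.map
            (TensorProduct.map LinearMap.id (Coalgebra.comul (R := K) (A := H)) ∘ₗ
              Coalgebra.comul)
            (TensorProduct.map LinearMap.id (Coalgebra.comul (R := K) (A := H)) ∘ₗ
              Coalgebra.comul) := by
          rw [n2, TensorProduct.map_comp
            (TensorProduct.map LinearMap.id (Coalgebra.comul (R := K) (A := H)))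
            (TensorProduct.map LinearMap.id (Coalgebra.comul (R := K) (A := H)))
            (Coalgebra.comul)
            (Coalgebra.comul)]
          exact rfl
      _ = _ := rfl
  exact left.trans right.symm

end HopfAux2

namespace HopfAux2
open TensorProduct HopfAux
variable {K : Type*} [CommRing K]
variable {H : Type*} [Ring H] [HopfAlgebra K H]

lemma hl2 : TensorProduct.map (ε2 K H) LinearMap.id ∘ₗ Δ2 K H
    = TensorProduct.mk K K (H ⊗[K] H) 1 := by
  have shuffle : TensorProduct.map (ε2 K H) (LinearMap.id (M := H ⊗[K] H)) ∘ₗ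
      (TensorProduct.tensorTensorTensorComm K H H H H).toLinearMap =
      TensorProduct.map (LinearMap.mul' K K) LinearMap.id ∘ₗ
        (TensorProduct.tensorTensorTensorComm K K H K H).toLinearMap ∘ₗ
        TensorProduct.map
          (TensorProduct.map (Coalgebra.counit (R := K) (A := H)) LinearMap.id)
          (TensorProduct.map (Coalgebra.counit (R := K) (A := H)) LinearMap.id) := by
    ext x y z w
    simp [ε2]
  have final : TensorProduct.map (LinearMap.mul' K K) LinearMap.id ∘ₗ
      (TensorProduct.tensorTensorTensorComm K K H K H).toLinearMap ∘ₗ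
      TensorProduct.map (TensorProduct.mk K K H 1) (TensorProduct.mk K K H 1) =
      TensorProduct.mk K K (H ⊗[K] H) 1 := by
    ext x y
    simp
  calc TensorProduct.map (ε2 K H) LinearMap.id ∘ₗ Δ2 K H
      = (TensorProduct.map (ε2 K H) LinearMap.id ∘ₗ
          (TensorProduct.tensorTensorTensorComm K H H H H).toLinearMap) ∘ₗ
          TensorProduct.map (Coalgebra.comul) (Coalgebra.comul) := rfl
    _ = TensorProduct.map (LinearMap.mul' K K) LinearMap.id ∘ₗ
          (TensorProduct.tensorTensorTensorComm K K H K H).toLinearMap ∘ₗ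
          TensorProduct.map
            (TensorProduct.map Coalgebra.counit LinearMap.id ∘ₗ Coalgebra.comul)
            (TensorProduct.map Coalgebra.counit LinearMap.id ∘ₗ Coalgebra.comul) := by
        rw [shuffle]
        rw [TensorProduct.map_comp
          (TensorProduct.map (Coalgebra.counit (R := K) (A := H)) LinearMap.id)
          (TensorProduct.map (Coalgebra.counit (R := K) (A := H)) LinearMap.id)
          (Coalgebra.comul)
          (Coalgebra.comul)]
        exact rfl
    _ = TensorProduct.mk K K (H ⊗[K] H) 1 := by
        rw [show TensorProduct.map (Coalgebra.counit (R := K) (A := H)) LinearMap.id ∘ₗ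
            Coalgebra.comul = TensorProduct.mk K K H 1 from
          Coalgebra.rTensor_counit_comp_comul (R := K) (A := H)]
        rw [final]

lemma hr2 : TensorProduct.map LinearMap.id (ε2 K H) ∘ₗ Δ2 K H
    = (TensorProduct.mk K (H ⊗[K] H) K).flip 1 := by
  have shuffle : TensorProduct.map (LinearMap.id (M := H ⊗[K] H)) (ε2 K H) ∘ₗ
      (TensorProduct.tensorTensorTensorComm K H H H H).toLinearMap =
      TensorProduct.map LinearMap.id (LinearMap.mul' K K) ∘ₗ
        (TensorProduct.tensorTensorTensorComm K H K H K).toLinearMap ∘ₗ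
        TensorProduct.map
          (TensorProduct.map LinearMap.id (Coalgebra.counit (R := K) (A := H)))
          (TensorProduct.map LinearMap.id (Coalgebra.counit (R := K) (A := H))) := by
    ext x y z w
    simp [ε2]
  have final : TensorProduct.map LinearMap.id (LinearMap.mul' K K) ∘ₗ
      (TensorProduct.tensorTensorTensorComm K H K H K).toLinearMap ∘ₗ
      TensorProduct.map ((TensorProduct.mk K H K).flip 1) ((TensorProduct.mk K H K).flip 1) =
      (TensorProduct.mk K (H ⊗[K] H) K).flip 1 := by
    ext x y
    simp
  calc TensorProduct.map LinearMap.id (ε2 K H) ∘ₗ Δ2 K H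
      = (TensorProduct.map LinearMap.id (ε2 K H) ∘ₗ
          (TensorProduct.tensorTensorTensorComm K H H H H).toLinearMap) ∘ₗ
          TensorProduct.map (Coalgebra.comul) (Coalgebra.comul) := rfl
    _ = TensorProduct.map LinearMap.id (LinearMap.mul' K K) ∘ₗ
          (TensorProduct.tensorTensorTensorComm K H K H K).toLinearMap ∘ₗ
          TensorProduct.map
            (TensorProduct.map LinearMap.id Coalgebra.counit ∘ₗ Coalgebra.comul)
            (TensorProduct.map LinearMap.id Coalgebra.counit ∘ₗ Coalgebra.comul) := by
        rw [shuffle]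
        rw [TensorProduct.map_comp
          (TensorProduct.map LinearMap.id (Coalgebra.counit (R := K) (A := H)))
          (TensorProduct.map LinearMap.id (Coalgebra.counit (R := K) (A := H)))
          (Coalgebra.comul)
          (Coalgebra.comul)]
        exact rfl
    _ = (TensorProduct.mk K (H ⊗[K] H) K).flip 1 := by
        rw [show TensorProduct.map LinearMap.id (Coalgebra.counit (R := K) (A := H)) ∘ₗ
            Coalgebra.comul = (TensorProduct.mk K H K).flip 1 from
          Coalgebra.lTensor_counit_comp_comul (R := K) (A := H)]
        rw [final]

end HopfAux2

namespace HopfAux3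
open TensorProduct HopfAux HopfAux2 Coalgebra
variable {K : Type*} [CommRing K]
variable {H : Type*} [Ring H] [HopfAlgebra K H]

lemma hcoH : (TensorProduct.assoc K H H H).toLinearMap ∘ₗ
    TensorProduct.map (Coalgebra.comul (R := K) (A := H)) LinearMap.id ∘ₗ Coalgebra.comul =
    TensorProduct.map LinearMap.id (Coalgebra.comul (R := K) (A := H)) ∘ₗ Coalgebra.comul :=
  Coalgebra.coassoc

lemma hlH : TensorProduct.map (Coalgebra.counit (R := K) (A := H)) LinearMap.id ∘ₗ
    Coalgebra.comul = TensorProduct.mk K K H 1 :=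
  Coalgebra.rTensor_counit_comp_comul

lemma hrH : TensorProduct.map LinearMap.id (Coalgebra.counit (R := K) (A := H)) ∘ₗ
    Coalgebra.comul = (TensorProduct.mk K H K).flip 1 :=
  Coalgebra.lTensor_counit_comp_comul

lemma conv_id_antipode : conv (Coalgebra.comul (R := K) (A := H)) LinearMap.id
    (HopfAlgebra.antipode (R := K) (A := H)) = cunit Coalgebra.counit :=
  HopfAlgebra.mul_antipode_lTensor_comul

lemma conv_antipode_id : conv (Coalgebra.comul (R := K) (A := H))
    (HopfAlgebra.antipode (R := K) (A := H)) LinearMap.id = cunit Coalgebra.counit :=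
  HopfAlgebra.mul_antipode_rTensor_comul

lemma antipode_one : HopfAlgebra.antipode (R := K) (1 : H) = 1 := by
  have := HopfAlgebra.mul_antipode_lTensor_comul_apply (R := K) (1 : H)
  simpa [Bialgebra.comul_one, Algebra.TensorProduct.one_def] using this

/-- product representation -/
noncomputable def reprMul {h g : H} {ι κ : Type*} (r : Coalgebra.Repr K h ι)
    (s : Coalgebra.Repr K g κ) :
    Coalgebra.Repr K (h * g) (ι × κ) where
  index := r.index ×ˢ s.index
  left := fun p => r.left p.1 * s.left p.2
  right := fun p => r.right p.1 * s.right p.2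
  eq := by
    rw [Bialgebra.comul_mul, ← r.eq, ← s.eq, Finset.sum_mul_sum]
    rw [Finset.sum_product]
    simp [Algebra.TensorProduct.tmul_mul_tmul]

lemma Δ2_tmul {ι κ : Type*} (h g : H) (r : Coalgebra.Repr K h ι) (s : Coalgebra.Repr K g κ) :
    Δ2 K H (h ⊗ₜ[K] g) = ∑ p ∈ r.index ×ˢ s.index,
      (r.left p.1 ⊗ₜ[K] s.left p.2) ⊗ₜ[K] (r.right p.1 ⊗ₜ[K] s.right p.2) := by
  simp only [Δ2, LinearMap.comp_apply, TensorProduct.map_tmul, ← r.eq, ← s.eq]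
  rw [TensorProduct.sum_tmul]
  simp only [map_sum]
  rw [Finset.sum_product]
  congr 1; ext i
  rw [TensorProduct.tmul_sum]
  simp only [map_sum, LinearEquiv.coe_coe, TensorProduct.tensorTensorTensorComm_tmul]

lemma antipode_mul (h g : H) :
    HopfAlgebra.antipode (R := K) (h * g) =
      HopfAlgebra.antipode (R := K) g * HopfAlgebra.antipode (R := K) h := by
  set κ := HopfAlgebra.antipode (R := K) (A := H)
  have h1 : conv (Δ2 K H) (κ ∘ₗ LinearMap.mul' K H) (LinearMap.mul' K H) = cunit (ε2 K H) := by
    apply TensorProduct.ext'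
    intro h g
    obtain r := Coalgebra.Repr.arbitrary K h
    obtain s := Coalgebra.Repr.arbitrary K g
    rw [conv_apply_of_eq (Δ2 K H) _ _ _ (r.index ×ˢ s.index) _ _ (Δ2_tmul h g r s)]
    have := HopfAlgebra.sum_antipode_mul_eq_algebraMap_counit (R := K) (reprMul r s)
    simp only [reprMul, LinearMap.comp_apply, LinearMap.mul'_apply] at this ⊢
    rw [this]
    simp [cunit, ε2, Algebra.TensorProduct.one_def]
  have h2 : conv (Δ2 K H) (LinearMap.mul' K H)
      (LinearMap.mul' K H ∘ₗ (TensorProduct.comm K H H).toLinearMap ∘ₗ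
        TensorProduct.map κ κ) = cunit (ε2 K H) := by
    apply TensorProduct.ext'
    intro h g
    obtain r := Coalgebra.Repr.arbitrary K h
    obtain s := Coalgebra.Repr.arbitrary K g
    rw [conv_apply_of_eq (Δ2 K H) _ _ _ (r.index ×ˢ s.index) _ _ (Δ2_tmul h g r s)]
    rw [Finset.sum_product]
    have inner : ∀ i ∈ r.index, ∑ j ∈ s.index,
        LinearMap.mul' K H (r.left i ⊗ₜ[K] s.left j) *
          (LinearMap.mul' K H ∘ₗ (TensorProduct.comm K H H).toLinearMap ∘ₗ
            TensorProduct.map κ κ) (r.right i ⊗ₜ[K] s.right j) =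
        Coalgebra.counit (R := K) g • (r.left i * κ (r.right i)) := by
      intro i _
      have : ∀ j, LinearMap.mul' K H (r.left i ⊗ₜ[K] s.left j) *
          (LinearMap.mul' K H ∘ₗ (TensorProduct.comm K H H).toLinearMap ∘ₗ
            TensorProduct.map κ κ) (r.right i ⊗ₜ[K] s.right j) =
          r.left i * ((s.left j * κ (s.right j)) * κ (r.right i)) := by
        intro j
        simp only [LinearMap.comp_apply, LinearMap.mul'_apply, TensorProduct.map_tmul,
          LinearEquiv.coe_coe, TensorProduct.comm_tmul]
        simp only [mul_assoc]
      rw [Finset.sum_congr rfl fun j _ => this j]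
      rw [← Finset.mul_sum, ← Finset.sum_mul]
      rw [HopfAlgebra.sum_mul_antipode_eq_smul (R := K) s]
      simp [smul_mul_assoc, mul_smul_comm]
    rw [Finset.sum_congr rfl inner, ← Finset.smul_sum,
      HopfAlgebra.sum_mul_antipode_eq_smul (R := K) r]
    simp only [cunit, ε2, LinearMap.comp_apply, TensorProduct.map_tmul,
      LinearMap.mul'_apply, Algebra.linearMap_apply, Algebra.algebraMap_eq_smul_one, smul_smul]
    rw [mul_comm]
  have uniq := conv_inv_unique (Δ2 K H) (ε2 K H) hco2 hl2 hr2 (LinearMap.mul' K H)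
    (κ ∘ₗ LinearMap.mul' K H)
    (LinearMap.mul' K H ∘ₗ (TensorProduct.comm K H H).toLinearMap ∘ₗ TensorProduct.map κ κ)
    h1 h2
  have := DFunLike.congr_fun uniq (h ⊗ₜ[K] g)
  simpa using this

end HopfAux3

namespace HopfAux4
open TensorProduct HopfAux HopfAux2 HopfAux3 Coalgebra
variable {K : Type*} [CommRing K]
variable {H : Type*} [Ring H] [HopfAlgebra K H]

lemma comul_comp_antipode :
    (Coalgebra.comul (R := K) (A := H)) ∘ₗ HopfAlgebra.antipode (R := K) =
      (TensorProduct.comm K H H).toLinearMap ∘ₗ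
        TensorProduct.map (HopfAlgebra.antipode (R := K)) (HopfAlgebra.antipode (R := K)) ∘ₗ
          Coalgebra.comul := by
  set κ := HopfAlgebra.antipode (R := K) (A := H) with hκ
  set k1 := (Algebra.TensorProduct.includeLeft (R := K) (S := K) (A := H) (B := H)).toLinearMap
    with hk1
  set k2 := (Algebra.TensorProduct.includeRight (R := K) (A := H) (B := H)).toLinearMap with hk2
  have k1_cunit : k1 ∘ₗ (cunit (B := H) (Coalgebra.counit (R := K) (A := H))) =
      cunit Coalgebra.counit := by
    apply LinearMap.ext; intro x
    simp [cunit, hk1, Algebra.TensorProduct.algebraMap_apply]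
  have k2_cunit : k2 ∘ₗ (cunit (B := H) (Coalgebra.counit (R := K) (A := H))) =
      cunit Coalgebra.counit := by
    apply LinearMap.ext; intro x
    simp [cunit, hk2, Algebra.TensorProduct.algebraMap_apply,
      Algebra.algebraMap_eq_smul_one, TensorProduct.smul_tmul, Algebra.TensorProduct.one_def]
  have sub1 : conv (Coalgebra.comul (R := K) (A := H)) k1 k2 = Coalgebra.comul := by
    apply LinearMap.ext; intro x
    obtain r := Coalgebra.Repr.arbitrary K x
    rw [conv_apply_of_eq _ _ _ _ r.index r.left r.right r.eq.symm]
    rw [← r.eq]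
    simp [hk1, hk2, Algebra.TensorProduct.tmul_mul_tmul]
  have sub2 : conv (Coalgebra.comul (R := K) (A := H)) (k2 ∘ₗ κ) (k1 ∘ₗ κ) =
      (TensorProduct.comm K H H).toLinearMap ∘ₗ
        TensorProduct.map κ κ ∘ₗ Coalgebra.comul := by
    apply LinearMap.ext; intro x
    obtain r := Coalgebra.Repr.arbitrary K x
    rw [conv_apply_of_eq _ _ _ _ r.index r.left r.right r.eq.symm]
    rw [LinearMap.comp_apply, LinearMap.comp_apply, ← r.eq]
    simp [hk1, hk2, Algebra.TensorProduct.tmul_mul_tmul]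
  have k2conv : conv (Coalgebra.comul (R := K) (A := H)) k2 (k2 ∘ₗ κ) =
      cunit Coalgebra.counit := by
    have h := alghom_comp_conv (Coalgebra.comul (R := K) (A := H))
      (Algebra.TensorProduct.includeRight (R := K) (A := H) (B := H)) LinearMap.id κ
    rw [conv_id_antipode] at h
    rw [← hk2] at h
    rw [LinearMap.comp_id] at h
    rw [← h, k2_cunit]
  have k1conv : conv (Coalgebra.comul (R := K) (A := H)) k1 (k1 ∘ₗ κ) =
      cunit Coalgebra.counit := by
    have h := alghom_comp_conv (Coalgebra.comul (R := K) (A := H))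
      (Algebra.TensorProduct.includeLeft (R := K) (S := K) (A := H) (B := H)) LinearMap.id κ
    rw [conv_id_antipode] at h
    rw [← hk1] at h
    rw [LinearMap.comp_id] at h
    rw [← h, k1_cunit]
  have h2' : conv (Coalgebra.comul (R := K) (A := H)) Coalgebra.comul
      ((TensorProduct.comm K H H).toLinearMap ∘ₗ
        TensorProduct.map κ κ ∘ₗ Coalgebra.comul) = cunit Coalgebra.counit := by
    have echain : conv (Coalgebra.comul (R := K) (A := H))
        (conv Coalgebra.comul k1 k2) (conv Coalgebra.comul (k2 ∘ₗ κ) (k1 ∘ₗ κ)) =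
        cunit Coalgebra.counit := by
      rw [conv_assoc _ hcoH, ← conv_assoc _ hcoH k2 (k2 ∘ₗ κ) (k1 ∘ₗ κ), k2conv,
        cunit_conv _ _ hlH, k1conv]
    calc (conv (Coalgebra.comul (R := K) (A := H)) Coalgebra.comul
          ((TensorProduct.comm K H H).toLinearMap ∘ₗ
          TensorProduct.map κ κ ∘ₗ Coalgebra.comul))
        = conv (Coalgebra.comul (R := K) (A := H))
            (conv Coalgebra.comul k1 k2) (conv Coalgebra.comul (k2 ∘ₗ κ) (k1 ∘ₗ κ)) := by
          rw [sub1, sub2]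
      _ = cunit Coalgebra.counit := echain
  have h1' : conv (Coalgebra.comul (R := K) (A := H))
      (Coalgebra.comul ∘ₗ κ) Coalgebra.comul = cunit Coalgebra.counit := by
    apply LinearMap.ext; intro x
    obtain r := Coalgebra.Repr.arbitrary K x
    rw [conv_apply_of_eq _ _ _ _ r.index r.left r.right r.eq.symm]
    have : ∀ i, (Coalgebra.comul ∘ₗ κ) (r.left i) * Coalgebra.comul (r.right i) =
        Coalgebra.comul (R := K) (κ (r.left i) * r.right i) := by
      intro i
      simp [Bialgebra.comul_mul]
    rw [Finset.sum_congr rfl fun i _ => this i, ← map_sum,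
      HopfAlgebra.sum_antipode_mul_eq_algebraMap_counit (R := K) r]
    simp [cunit, Algebra.algebraMap_eq_smul_one]
  have uniq := conv_inv_unique (Coalgebra.comul (R := K) (A := H)) Coalgebra.counit
    hcoH hlH hrH Coalgebra.comul (Coalgebra.comul ∘ₗ κ)
    ((TensorProduct.comm K H H).toLinearMap ∘ₗ TensorProduct.map κ κ ∘ₗ Coalgebra.comul)
    h1' h2'
  exact uniq

lemma comul_antipode (x : H) :
    Coalgebra.comul (R := K) (HopfAlgebra.antipode (R := K) x) =
      (TensorProduct.comm K H H)
        (TensorProduct.map (HopfAlgebra.antipode (R := K)) (HopfAlgebra.antipode (R := K))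
          (Coalgebra.comul x)) := by
  have := DFunLike.congr_fun (comul_comp_antipode (K := K) (H := H)) x
  simpa using this

end HopfAux4

namespace HopfAux5
open TensorProduct HopfAux HopfAux2 HopfAux3 HopfAux4 Coalgebra

variable {K A H : Type*} [CommRing K] [Ring A] [Ring H]
    [HopfAlgebra K A] [HopfAlgebra K H]
    (π : A →ₐc[K] H) (i : H →ₐc[K] A)

lemma PiMap_eq_conv : PiMap K π i = conv (Coalgebra.comul (R := K) (A := A)) LinearMap.id
    ((i : H →ₗ[K] A) ∘ₗ (HopfAlgebra.antipode (R := K) (A := H)) ∘ₗ (π : A →ₗ[K] H)) := rfl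

lemma F1 (hπi : π.comp i = BialgHom.id K H) :
    (π : A →ₗ[K] H) ∘ₗ (i : H →ₗ[K] A) = LinearMap.id := by
  apply LinearMap.ext; intro x
  have := DFunLike.congr_fun hπi x
  simpa using this

lemma F2 : TensorProduct.map (i : H →ₗ[K] A) (i : H →ₗ[K] A) ∘ₗ
    Coalgebra.comul (R := K) (A := H) = Coalgebra.comul ∘ₗ (i : H →ₗ[K] A) :=
  CoalgHomClass.map_comp_comul i

lemma F3 : TensorProduct.map (π : A →ₗ[K] H) (π : A →ₗ[K] H) ∘ₗ
    Coalgebra.comul (R := K) (A := A) = Coalgebra.comul ∘ₗ (π : A →ₗ[K] H) :=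
  CoalgHomClass.map_comp_comul π

lemma F4 : Coalgebra.counit (R := K) (A := H) ∘ₗ (π : A →ₗ[K] H) =
    Coalgebra.counit (R := K) (A := A) :=
  CoalgHomClass.counit_comp π

/-- `ρ = (id ⊗ π) ∘ Δ` as an algebra homomorphism `A → A ⊗ H`. -/
noncomputable def ρalg : A →ₐ[K] A ⊗[K] H :=
  (Algebra.TensorProduct.map (AlgHom.id K A) (π : A →ₐ[K] H)).comp (Bialgebra.comulAlgHom K A)

lemma ρ_eq : (ρalg π).toLinearMap =
    TensorProduct.map LinearMap.id (π : A →ₗ[K] H) ∘ₗ Coalgebra.comul (R := K) (A := A) := by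
  apply LinearMap.ext; intro a
  have : ((Algebra.TensorProduct.map (AlgHom.id K A) ((π : A →ₐ[K] H))).toLinearMap) =
      TensorProduct.map LinearMap.id (π : A →ₗ[K] H) := by
    ext x y; simp
  calc (ρalg π) a = (Algebra.TensorProduct.map (AlgHom.id K A) (π : A →ₐ[K] H))
        (Bialgebra.comulAlgHom K A a) := rfl
    _ = TensorProduct.map LinearMap.id (π : A →ₗ[K] H) (Coalgebra.comul a) := by
        rw [← this]; rfl

end HopfAux5

namespace HopfAux5
open TensorProduct HopfAux HopfAux2 HopfAux3 HopfAux4 Coalgebra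

variable {K A H : Type*} [CommRing K] [Ring A] [Ring H]
    [HopfAlgebra K A] [HopfAlgebra K H]
    (π : A →ₐc[K] H) (i : H →ₐc[K] A)

/-- `Δ_A (i y)` as an explicit sum -/
lemma comul_i {ι : Type*} (y : H) (r : Coalgebra.Repr K y ι) :
    Coalgebra.comul (R := K) ((i : H →ₗ[K] A) y) =
      ∑ t ∈ r.index, (i : H →ₗ[K] A) (r.left t) ⊗ₜ[K] (i : H →ₗ[K] A) (r.right t) := by
  have := DFunLike.congr_fun (F2 (K := K) (A := A) (H := H) i) y
  simp only [LinearMap.comp_apply] at this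
  rw [← this, ← r.eq]
  simp

lemma rho_conv : (ρalg π).toLinearMap = conv (Coalgebra.comul (R := K) (A := A))
    (Algebra.TensorProduct.includeLeft (R := K) (S := K) (A := A) (B := H)).toLinearMap
    ((Algebra.TensorProduct.includeRight (R := K) (A := A) (B := H)).toLinearMap ∘ₗ
      (π : A →ₗ[K] H)) := by
  apply LinearMap.ext; intro a
  obtain r := Coalgebra.Repr.arbitrary K a
  rw [conv_apply_of_eq _ _ _ _ r.index r.left r.right r.eq.symm]
  rw [DFunLike.congr_fun (ρ_eq (K := K) (A := A) (H := H) π) a]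
  simp only [LinearMap.comp_apply]
  rw [← r.eq]
  simp [Algebra.TensorProduct.tmul_mul_tmul]

lemma tau_conv (hπi : π.comp i = BialgHom.id K H) :
    (ρalg π).toLinearMap ∘ₗ (i : H →ₗ[K] A) =
      conv (Coalgebra.comul (R := K) (A := H))
        ((Algebra.TensorProduct.includeLeft (R := K) (S := K) (A := A) (B := H)).toLinearMap ∘ₗ
          (i : H →ₗ[K] A))
        (Algebra.TensorProduct.includeRight (R := K) (A := A) (B := H)).toLinearMap := by
  apply LinearMap.ext; intro y
  obtain r := Coalgebra.Repr.arbitrary K y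
  rw [conv_apply_of_eq _ _ _ _ r.index r.left r.right r.eq.symm]
  rw [LinearMap.comp_apply, DFunLike.congr_fun (ρ_eq (K := K) (A := A) (H := H) π) _]
  simp only [LinearMap.comp_apply]
  rw [comul_i i y r]
  have hpi : ∀ x : H, π (i x) = x := fun x => by simpa using DFunLike.congr_fun hπi x
  simp [Algebra.TensorProduct.tmul_mul_tmul, hpi]

lemma tau_antipode (hπi : π.comp i = BialgHom.id K H) :
    (ρalg π).toLinearMap ∘ₗ (i : H →ₗ[K] A) ∘ₗ HopfAlgebra.antipode (R := K) (A := H) =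
      conv (Coalgebra.comul (R := K) (A := H))
        ((Algebra.TensorProduct.includeRight (R := K) (A := A) (B := H)).toLinearMap ∘ₗ
          HopfAlgebra.antipode (R := K) (A := H))
        (((Algebra.TensorProduct.includeLeft (R := K) (S := K) (A := A) (B := H)).toLinearMap ∘ₗ
          (i : H →ₗ[K] A)) ∘ₗ HopfAlgebra.antipode (R := K) (A := H)) := by
  apply LinearMap.ext; intro y
  obtain r := Coalgebra.Repr.arbitrary K y
  rw [conv_apply_of_eq _ _ _ _ r.index r.left r.right r.eq.symm]
  have hpi : ∀ x : H, π (i x) = x := fun x => by simpa using DFunLike.congr_fun hπi x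
  have lhs : ((ρalg π).toLinearMap ∘ₗ (i : H →ₗ[K] A) ∘ₗ
      HopfAlgebra.antipode (R := K) (A := H)) y =
      TensorProduct.map (LinearMap.id) (π : A →ₗ[K] H)
        (Coalgebra.comul ((i : H →ₗ[K] A) (HopfAlgebra.antipode (R := K) y))) := by
    rw [LinearMap.comp_apply, LinearMap.comp_apply,
      DFunLike.congr_fun (ρ_eq (K := K) (A := A) (H := H) π) _]
    rfl
  rw [lhs]
  have h2 := DFunLike.congr_fun (F2 (K := K) (A := A) (H := H) i)
    (HopfAlgebra.antipode (R := K) y)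
  simp only [LinearMap.comp_apply] at h2
  rw [← h2, comul_antipode (K := K) y, ← r.eq]
  simp [Algebra.TensorProduct.tmul_mul_tmul, hpi]

lemma j2_cunit : (Algebra.TensorProduct.includeRight (R := K) (A := A) (B := H)).toLinearMap ∘ₗ
    (cunit (B := H) (Coalgebra.counit (R := K) (A := H))) =
    cunit (Coalgebra.counit (R := K) (A := H)) := by
  apply LinearMap.ext; intro x
  simp [cunit, Algebra.TensorProduct.algebraMap_apply,
    Algebra.algebraMap_eq_smul_one, TensorProduct.smul_tmul, Algebra.TensorProduct.one_def]

lemma j2conv : conv (Coalgebra.comul (R := K) (A := H))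
    (Algebra.TensorProduct.includeRight (R := K) (A := A) (B := H)).toLinearMap
    ((Algebra.TensorProduct.includeRight (R := K) (A := A) (B := H)).toLinearMap ∘ₗ
      HopfAlgebra.antipode (R := K) (A := H)) =
    cunit (Coalgebra.counit (R := K) (A := H)) := by
  have h := alghom_comp_conv (Coalgebra.comul (R := K) (A := H))
    (Algebra.TensorProduct.includeRight (R := K) (A := A) (B := H)) LinearMap.id
    (HopfAlgebra.antipode (R := K) (A := H))
  rw [conv_id_antipode, LinearMap.comp_id] at h
  rw [← h, j2_cunit]

lemma j1_cunit : (Algebra.TensorProduct.includeLeft (R := K) (S := K) (A := A)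
    (B := H)).toLinearMap ∘ₗ (cunit (B := A) (Coalgebra.counit (R := K) (A := A))) =
    cunit (Coalgebra.counit (R := K) (A := A)) := by
  apply LinearMap.ext; intro x
  simp [cunit, Algebra.TensorProduct.algebraMap_apply]

lemma mid (hπi : π.comp i = BialgHom.id K H) :
    conv (Coalgebra.comul (R := K) (A := A))
      ((Algebra.TensorProduct.includeRight (R := K) (A := A) (B := H)).toLinearMap ∘ₗ
        (π : A →ₗ[K] H))
      (((Algebra.TensorProduct.includeRight (R := K) (A := A) (B := H)).toLinearMap ∘ₗ
        HopfAlgebra.antipode (R := K) (A := H)) ∘ₗ (π : A →ₗ[K] H)) =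
    cunit (Coalgebra.counit (R := K) (A := A)) := by
  rw [← conv_comp_coalghom (Coalgebra.comul (R := K) (A := H)) Coalgebra.comul
    (π : A →ₗ[K] H) (F3 π).symm]
  rw [j2conv]
  exact congrArg (fun m => Algebra.linearMap K (A ⊗[K] H) ∘ₗ m) (F4 π)

end HopfAux5

namespace HopfAux5
open TensorProduct HopfAux HopfAux2 HopfAux3 HopfAux4 Coalgebra

variable {K A H : Type*} [CommRing K] [Ring A] [Ring H]
    [HopfAlgebra K A] [HopfAlgebra K H]
    (π : A →ₐc[K] H) (i : H →ₐc[K] A)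

lemma rho_Pi (hπi : π.comp i = BialgHom.id K H) :
    (ρalg π).toLinearMap ∘ₗ PiMap K π i =
    (Algebra.TensorProduct.includeLeft (R := K) (S := K) (A := A) (B := H)).toLinearMap ∘ₗ
      PiMap K π i := by
  set jl := (Algebra.TensorProduct.includeLeft (R := K) (S := K) (A := A) (B := H)).toLinearMap
  set jr := (Algebra.TensorProduct.includeRight (R := K) (A := A) (B := H)).toLinearMap
  set κ := HopfAlgebra.antipode (R := K) (A := H)
  set πL := (π : A →ₗ[K] H)
  set iL := (i : H →ₗ[K] A)
  have e1 : (ρalg π).toLinearMap ∘ₗ PiMap K π i =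
      conv (Coalgebra.comul (R := K) (A := A)) (ρalg π).toLinearMap
        ((ρalg π).toLinearMap ∘ₗ (iL ∘ₗ κ ∘ₗ πL)) := by
    have h := alghom_comp_conv (Coalgebra.comul (R := K) (A := A)) (ρalg π)
      LinearMap.id (iL ∘ₗ κ ∘ₗ πL)
    rw [LinearMap.comp_id] at h
    exact h
  have e2 : (ρalg π).toLinearMap ∘ₗ (iL ∘ₗ κ ∘ₗ πL) =
      conv (Coalgebra.comul (R := K) (A := A)) ((jr ∘ₗ κ) ∘ₗ πL) (((jl ∘ₗ iL) ∘ₗ κ) ∘ₗ πL) := by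
    calc (ρalg π).toLinearMap ∘ₗ (iL ∘ₗ κ ∘ₗ πL)
        = ((ρalg π).toLinearMap ∘ₗ iL ∘ₗ κ) ∘ₗ πL := rfl
      _ = conv (Coalgebra.comul (R := K) (A := H)) (jr ∘ₗ κ) ((jl ∘ₗ iL) ∘ₗ κ) ∘ₗ πL := by
          rw [tau_antipode π i hπi]
      _ = conv (Coalgebra.comul (R := K) (A := A)) ((jr ∘ₗ κ) ∘ₗ πL)
            (((jl ∘ₗ iL) ∘ₗ κ) ∘ₗ πL) :=
          conv_comp_coalghom _ _ _ (F3 π).symm _ _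
  rw [e1, e2, rho_conv π]
  rw [conv_assoc _ (hcoH (K := K) (H := A))]
  rw [← conv_assoc _ (hcoH (K := K) (H := A)) (jr ∘ₗ πL) ((jr ∘ₗ κ) ∘ₗ πL)
    (((jl ∘ₗ iL) ∘ₗ κ) ∘ₗ πL)]
  rw [mid π i hπi]
  rw [cunit_conv _ _ (hlH (K := K) (H := A))]
  have h := alghom_comp_conv (Coalgebra.comul (R := K) (A := A))
    (Algebra.TensorProduct.includeLeft (R := K) (S := K) (A := A) (B := H))
    LinearMap.id (iL ∘ₗ κ ∘ₗ πL)
  rw [LinearMap.comp_id] at h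
  rw [show jl ∘ₗ PiMap K π i = conv (Coalgebra.comul (R := K) (A := A)) jl
    (jl ∘ₗ (iL ∘ₗ κ ∘ₗ πL)) from h]
  rfl

lemma Pi_fix (b : A)
    (hb : TensorProduct.map LinearMap.id (π : A →ₗ[K] H)
      (Coalgebra.comul (R := K) b) = b ⊗ₜ[K] 1) :
    PiMap K π i b = b := by
  have expand : PiMap K π i b = LinearMap.mul' K A
      (TensorProduct.map LinearMap.id ((i : H →ₗ[K] A) ∘ₗ HopfAlgebra.antipode (R := K))
        (TensorProduct.map LinearMap.id (π : A →ₗ[K] H) (Coalgebra.comul (R := K) b))) := by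
    have h := DFunLike.congr_fun (map_comp_snd (LinearMap.id (M := A))
      ((i : H →ₗ[K] A) ∘ₗ HopfAlgebra.antipode (R := K)) (π : A →ₗ[K] H))
      (Coalgebra.comul (R := K) b)
    exact congrArg (LinearMap.mul' K A) h
  rw [expand, hb]
  simp [antipode_one]

lemma rho_of_mem (hπi : π.comp i = BialgHom.id K H) {b : A}
    (hb : b ∈ LinearMap.range (PiMap K π i)) :
    TensorProduct.map LinearMap.id (π : A →ₗ[K] H)
      (Coalgebra.comul (R := K) b) = b ⊗ₜ[K] 1 := by
  obtain ⟨a, rfl⟩ := hb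
  have h := DFunLike.congr_fun (rho_Pi π i hπi) a
  simp only [LinearMap.comp_apply] at h
  have h2 := DFunLike.congr_fun (ρ_eq (K := K) (A := A) (H := H) π) (PiMap K π i a)
  simp only [LinearMap.comp_apply] at h2
  rw [← h2, h]
  rfl

lemma mem_range_of_rho (b : A)
    (hb : TensorProduct.map LinearMap.id (π : A →ₗ[K] H)
      (Coalgebra.comul (R := K) b) = b ⊗ₜ[K] 1) :
    b ∈ LinearMap.range (PiMap K π i) :=
  ⟨b, Pi_fix π i b hb⟩

end HopfAux5

namespace HopfAux5
open TensorProduct HopfAux HopfAux2 HopfAux3 HopfAux4 Coalgebra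

variable {K A H : Type*} [CommRing K] [Ring A] [Ring H]
    [HopfAlgebra K A] [HopfAlgebra K H]
    (π : A →ₐc[K] H) (i : H →ₐc[K] A)

lemma adAct_sum {ι : Type*} (h : H) (b : A) (r : Coalgebra.Repr K h ι) :
    adAct K i h b = ∑ t ∈ r.index, (i : H →ₗ[K] A) (r.left t) *
      (b * (i : H →ₗ[K] A) (HopfAlgebra.antipode (R := K) (r.right t))) := by
  rw [adAct, ← r.eq]
  simp

lemma adAct_eq_conv (b : A) (h : H) :
    adAct K i h b = conv (Coalgebra.comul (R := K) (A := H))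
      (LinearMap.mulRight K b ∘ₗ (i : H →ₗ[K] A))
      ((i : H →ₗ[K] A) ∘ₗ HopfAlgebra.antipode (R := K)) h := by
  obtain r := Coalgebra.Repr.arbitrary K h
  rw [adAct_sum i h b r, conv_apply_of_eq _ _ _ _ r.index r.left r.right r.eq.symm]
  simp [mul_assoc]

lemma adAct_one (b : A) : adAct K i (1 : H) b = b := by
  rw [adAct, Bialgebra.comul_one, Algebra.TensorProduct.one_def]
  simp [antipode_one]

lemma adAct_mul (h h' : H) (b : A) :
    adAct K i (h * h') b = adAct K i h (adAct K i h' b) := by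
  obtain r := Coalgebra.Repr.arbitrary K h
  obtain s := Coalgebra.Repr.arbitrary K h'
  rw [adAct_sum i (h * h') b (reprMul r s), adAct_sum i h (adAct K i h' b) r,
    adAct_sum i h' b s]
  simp only [reprMul]
  rw [Finset.sum_product]
  refine Finset.sum_congr rfl fun t _ => ?_
  rw [Finset.sum_mul, Finset.mul_sum]
  refine Finset.sum_congr rfl fun u _ => ?_
  rw [antipode_mul]
  have imul : ∀ x y : H, (i : H →ₗ[K] A) (x * y) =
      (i : H →ₗ[K] A) x * (i : H →ₗ[K] A) y := fun x y => map_mul i x y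
  simp only [imul, mul_assoc]

lemma jr_mulRight (b : A) :
    (Algebra.TensorProduct.includeRight (R := K) (A := A) (B := H)).toLinearMap ∘ₗ
      LinearMap.id = LinearMap.id ∘ₗ
      (Algebra.TensorProduct.includeRight (R := K) (A := A) (B := H)).toLinearMap := by
  simp

lemma rho_ad (hπi : π.comp i = BialgHom.id K H) (b : A)
    (hρb : (ρalg π) b = b ⊗ₜ[K] 1) :
    (ρalg π).toLinearMap ∘ₗ conv (Coalgebra.comul (R := K) (A := H))
      (LinearMap.mulRight K b ∘ₗ (i : H →ₗ[K] A))
      ((i : H →ₗ[K] A) ∘ₗ HopfAlgebra.antipode (R := K)) =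
    (Algebra.TensorProduct.includeLeft (R := K) (S := K) (A := A) (B := H)).toLinearMap ∘ₗ
      conv (Coalgebra.comul (R := K) (A := H))
        (LinearMap.mulRight K b ∘ₗ (i : H →ₗ[K] A))
        ((i : H →ₗ[K] A) ∘ₗ HopfAlgebra.antipode (R := K)) := by
  set jl := (Algebra.TensorProduct.includeLeft (R := K) (S := K) (A := A) (B := H)).toLinearMap
    with hjl
  set jr := (Algebra.TensorProduct.includeRight (R := K) (A := A) (B := H)).toLinearMap with hjr
  set κ := HopfAlgebra.antipode (R := K) (A := H)
  set iL := (i : H →ₗ[K] A)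
  have rmul : (ρalg π).toLinearMap ∘ₗ LinearMap.mulRight K b =
      LinearMap.mulRight K (b ⊗ₜ[K] (1 : H)) ∘ₗ (ρalg π).toLinearMap := by
    apply LinearMap.ext; intro x
    simp [map_mul, hρb]
  have lmul : jl ∘ₗ LinearMap.mulRight K b =
      LinearMap.mulRight K (b ⊗ₜ[K] (1 : H)) ∘ₗ jl := by
    apply LinearMap.ext; intro x
    simp [hjl, Algebra.TensorProduct.tmul_mul_tmul]
  have commbr : LinearMap.mulRight K (b ⊗ₜ[K] (1 : H)) ∘ₗ jr =
      LinearMap.mulLeft K (b ⊗ₜ[K] (1 : H)) ∘ₗ jr := by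
    apply LinearMap.ext; intro y
    simp [hjr, Algebra.TensorProduct.tmul_mul_tmul]
  calc ((ρalg π).toLinearMap ∘ₗ conv (Coalgebra.comul (R := K) (A := H))
        (LinearMap.mulRight K b ∘ₗ iL) (iL ∘ₗ κ))
      = conv (Coalgebra.comul (R := K) (A := H))
          ((ρalg π).toLinearMap ∘ₗ (LinearMap.mulRight K b ∘ₗ iL))
          ((ρalg π).toLinearMap ∘ₗ (iL ∘ₗ κ)) :=
        alghom_comp_conv _ (ρalg π) _ _
    _ = conv (Coalgebra.comul (R := K) (A := H))
          (LinearMap.mulRight K (b ⊗ₜ[K] (1 : H)) ∘ₗ ((ρalg π).toLinearMap ∘ₗ iL))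
          ((ρalg π).toLinearMap ∘ₗ iL ∘ₗ κ) := by
        rw [show (ρalg π).toLinearMap ∘ₗ (LinearMap.mulRight K b ∘ₗ iL) =
          ((ρalg π).toLinearMap ∘ₗ LinearMap.mulRight K b) ∘ₗ iL from rfl, rmul]
        exact rfl
    _ = conv (Coalgebra.comul (R := K) (A := H))
          (LinearMap.mulRight K (b ⊗ₜ[K] (1 : H)) ∘ₗ
            conv (Coalgebra.comul (R := K) (A := H)) (jl ∘ₗ iL) jr)
          (conv (Coalgebra.comul (R := K) (A := H)) (jr ∘ₗ κ) ((jl ∘ₗ iL) ∘ₗ κ)) := by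
        rw [tau_conv π i hπi, tau_antipode π i hπi]
    _ = conv (Coalgebra.comul (R := K) (A := H))
          (conv (Coalgebra.comul (R := K) (A := H)) (jl ∘ₗ iL)
            (LinearMap.mulRight K (b ⊗ₜ[K] (1 : H)) ∘ₗ jr))
          (conv (Coalgebra.comul (R := K) (A := H)) (jr ∘ₗ κ) ((jl ∘ₗ iL) ∘ₗ κ)) := by
        rw [mulRight_comp_conv]
    _ = conv (Coalgebra.comul (R := K) (A := H)) (jl ∘ₗ iL)
          (conv (Coalgebra.comul (R := K) (A := H))
            (conv (Coalgebra.comul (R := K) (A := H))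
              (LinearMap.mulRight K (b ⊗ₜ[K] (1 : H)) ∘ₗ jr) (jr ∘ₗ κ))
            ((jl ∘ₗ iL) ∘ₗ κ)) := by
        rw [conv_assoc _ (hcoH (K := K) (H := H)),
          ← conv_assoc _ (hcoH (K := K) (H := H))
            (LinearMap.mulRight K (b ⊗ₜ[K] (1 : H)) ∘ₗ jr) (jr ∘ₗ κ) ((jl ∘ₗ iL) ∘ₗ κ)]
    _ = conv (Coalgebra.comul (R := K) (A := H)) (jl ∘ₗ iL)
          (LinearMap.mulLeft K (b ⊗ₜ[K] (1 : H)) ∘ₗ ((jl ∘ₗ iL) ∘ₗ κ)) := by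
        rw [commbr, ← mulLeft_comp_conv, j2conv, ← mulLeft_comp_conv,
          cunit_conv _ _ (hlH (K := K) (H := H))]
    _ = conv (Coalgebra.comul (R := K) (A := H))
          (LinearMap.mulRight K (b ⊗ₜ[K] (1 : H)) ∘ₗ (jl ∘ₗ iL)) ((jl ∘ₗ iL) ∘ₗ κ) := by
        rw [conv_mulRight_eq_mulLeft]
    _ = jl ∘ₗ conv (Coalgebra.comul (R := K) (A := H))
          (LinearMap.mulRight K b ∘ₗ iL) (iL ∘ₗ κ) := by
        rw [alghom_comp_conv _ (Algebra.TensorProduct.includeLeft (R := K) (S := K)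
          (A := A) (B := H)) (LinearMap.mulRight K b ∘ₗ iL) (iL ∘ₗ κ)]
        rw [show jl ∘ₗ (LinearMap.mulRight K b ∘ₗ iL) = (jl ∘ₗ LinearMap.mulRight K b) ∘ₗ iL
          from rfl, lmul]
        rfl

lemma ad_mem (hπi : π.comp i = BialgHom.id K H) (h : H) (b : A)
    (hb : b ∈ LinearMap.range (PiMap K π i)) :
    adAct K i h b ∈ LinearMap.range (PiMap K π i) := by
  have hρ := rho_of_mem π i hπi hb
  have hρb : (ρalg π) b = b ⊗ₜ[K] 1 := by
    have h2 := DFunLike.congr_fun (ρ_eq (K := K) (A := A) (H := H) π) b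
    simp only [LinearMap.comp_apply] at h2
    exact h2.trans hρ
  apply mem_range_of_rho π i
  rw [adAct_eq_conv i b h]
  have hmap := DFunLike.congr_fun (rho_ad π i hπi b hρb) h
  simp only [LinearMap.comp_apply] at hmap
  have h2 := DFunLike.congr_fun (ρ_eq (K := K) (A := A) (H := H) π)
    (conv (Coalgebra.comul (R := K) (A := H))
      (LinearMap.mulRight K b ∘ₗ (i : H →ₗ[K] A))
      ((i : H →ₗ[K] A) ∘ₗ HopfAlgebra.antipode (R := K)) h)
  simp only [LinearMap.comp_apply] at h2
  rw [← h2, hmap]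
  rfl

end HopfAux5

namespace HopfAux5
open TensorProduct HopfAux HopfAux2 HopfAux3 HopfAux4 Coalgebra

variable {K A H : Type*} [CommRing K] [Ring A] [Ring H]
    [HopfAlgebra K A] [HopfAlgebra K H]
    (π : A →ₐc[K] H) (i : H →ₐc[K] A)

lemma comulAlgHom_toLinearMap :
    (Bialgebra.comulAlgHom K A).toLinearMap = Coalgebra.comul (R := K) (A := A) := by
  apply LinearMap.ext; intro a; rfl

/-- `Δ = includeLeft ⋆ includeRight` in the convolution algebra `Hom(A, A ⊗ A)`. -/
lemma conv_incl : conv (Coalgebra.comul (R := K) (A := A))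
    (Algebra.TensorProduct.includeLeft (R := K) (S := K) (A := A) (B := A)).toLinearMap
    (Algebra.TensorProduct.includeRight (R := K) (A := A) (B := A)).toLinearMap =
    Coalgebra.comul (R := K) (A := A) := by
  apply LinearMap.ext; intro a
  obtain r := Coalgebra.Repr.arbitrary K a
  rw [conv_apply_of_eq _ _ _ _ r.index r.left r.right r.eq.symm, ← r.eq]
  simp [Algebra.TensorProduct.tmul_mul_tmul]

lemma delta_iκ : (Coalgebra.comul (R := K) (A := A)) ∘ₗ
      ((i : H →ₗ[K] A) ∘ₗ HopfAlgebra.antipode (R := K)) =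
    conv (Coalgebra.comul (R := K) (A := H))
      ((Algebra.TensorProduct.includeRight (R := K) (A := A) (B := A)).toLinearMap ∘ₗ
        (i : H →ₗ[K] A) ∘ₗ HopfAlgebra.antipode (R := K))
      ((Algebra.TensorProduct.includeLeft (R := K) (S := K) (A := A) (B := A)).toLinearMap ∘ₗ
        (i : H →ₗ[K] A) ∘ₗ HopfAlgebra.antipode (R := K)) := by
  apply LinearMap.ext; intro y
  obtain r := Coalgebra.Repr.arbitrary K y
  rw [conv_apply_of_eq _ _ _ _ r.index r.left r.right r.eq.symm]
  have h2 := DFunLike.congr_fun (F2 (K := K) (A := A) (H := H) i)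
    (HopfAlgebra.antipode (R := K) y)
  simp only [LinearMap.comp_apply] at h2 ⊢
  rw [← h2, comul_antipode (K := K) y, ← r.eq]
  simp [Algebra.TensorProduct.tmul_mul_tmul]

lemma DeltaPi (hπi : π.comp i = BialgHom.id K H) :
    Coalgebra.comul (R := K) (A := A) ∘ₗ PiMap K π i =
    conv (Coalgebra.comul (R := K) (A := A))
      (Algebra.TensorProduct.includeLeft (R := K) (S := K) (A := A) (B := A)).toLinearMap
      (conv (Coalgebra.comul (R := K) (A := A))
        ((Algebra.TensorProduct.includeRight (R := K) (A := A) (B := A)).toLinearMap ∘ₗ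
          PiMap K π i)
        (((Algebra.TensorProduct.includeLeft (R := K) (S := K) (A := A)
            (B := A)).toLinearMap ∘ₗ (i : H →ₗ[K] A) ∘ₗ HopfAlgebra.antipode (R := K)) ∘ₗ
          (π : A →ₗ[K] H))) := by
  set k1 := (Algebra.TensorProduct.includeLeft (R := K) (S := K) (A := A) (B := A)).toLinearMap
  set k2 := (Algebra.TensorProduct.includeRight (R := K) (A := A) (B := A)).toLinearMap
  set κ := HopfAlgebra.antipode (R := K) (A := H)
  set πL := (π : A →ₗ[K] H)
  set iL := (i : H →ₗ[K] A)
  have e1 : Coalgebra.comul (R := K) (A := A) ∘ₗ PiMap K π i =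
      conv (Coalgebra.comul (R := K) (A := A)) (Coalgebra.comul (R := K) (A := A))
        (Coalgebra.comul (R := K) (A := A) ∘ₗ (iL ∘ₗ κ ∘ₗ πL)) := by
    have h := alghom_comp_conv (Coalgebra.comul (R := K) (A := A))
      (Bialgebra.comulAlgHom K A) LinearMap.id (iL ∘ₗ κ ∘ₗ πL)
    rw [LinearMap.comp_id, comulAlgHom_toLinearMap] at h
    exact h
  have e2 : Coalgebra.comul (R := K) (A := A) ∘ₗ (iL ∘ₗ κ ∘ₗ πL) =
      conv (Coalgebra.comul (R := K) (A := A))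
        ((k2 ∘ₗ iL ∘ₗ κ) ∘ₗ πL) ((k1 ∘ₗ iL ∘ₗ κ) ∘ₗ πL) := by
    calc Coalgebra.comul (R := K) (A := A) ∘ₗ (iL ∘ₗ κ ∘ₗ πL)
        = (Coalgebra.comul (R := K) (A := A) ∘ₗ (iL ∘ₗ κ)) ∘ₗ πL := rfl
      _ = conv (Coalgebra.comul (R := K) (A := H)) (k2 ∘ₗ iL ∘ₗ κ) (k1 ∘ₗ iL ∘ₗ κ) ∘ₗ πL := by
          rw [delta_iκ (K := K) (A := A) i]
      _ = conv (Coalgebra.comul (R := K) (A := A))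
            ((k2 ∘ₗ iL ∘ₗ κ) ∘ₗ πL) ((k1 ∘ₗ iL ∘ₗ κ) ∘ₗ πL) :=
          conv_comp_coalghom _ _ _ (F3 π).symm _ _
  rw [e1, e2]
  have A1 : conv (Coalgebra.comul (R := K) (A := A)) (Coalgebra.comul (R := K) (A := A))
      (conv Coalgebra.comul ((k2 ∘ₗ iL ∘ₗ κ) ∘ₗ πL) ((k1 ∘ₗ iL ∘ₗ κ) ∘ₗ πL)) =
      conv (Coalgebra.comul (R := K) (A := A)) (conv Coalgebra.comul k1 k2)
        (conv Coalgebra.comul ((k2 ∘ₗ iL ∘ₗ κ) ∘ₗ πL) ((k1 ∘ₗ iL ∘ₗ κ) ∘ₗ πL)) := by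
    rw [conv_incl]
  rw [A1]
  rw [conv_assoc _ (hcoH (K := K) (H := A)) k1 k2
    (conv Coalgebra.comul ((k2 ∘ₗ iL ∘ₗ κ) ∘ₗ πL) ((k1 ∘ₗ iL ∘ₗ κ) ∘ₗ πL))]
  rw [← conv_assoc _ (hcoH (K := K) (H := A)) k2 ((k2 ∘ₗ iL ∘ₗ κ) ∘ₗ πL)
    ((k1 ∘ₗ iL ∘ₗ κ) ∘ₗ πL)]
  have hk2 : conv (Coalgebra.comul (R := K) (A := A)) k2 ((k2 ∘ₗ iL ∘ₗ κ) ∘ₗ πL) =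
      k2 ∘ₗ PiMap K π i := by
    have h := alghom_comp_conv (Coalgebra.comul (R := K) (A := A))
      (Algebra.TensorProduct.includeRight (R := K) (A := A) (B := A))
      LinearMap.id (iL ∘ₗ κ ∘ₗ πL)
    rw [LinearMap.comp_id] at h
    exact h.symm
  rw [hk2]

lemma stmt4 (hπi : π.comp i = BialgHom.id K H) (b : A)
    (hb : b ∈ LinearMap.range (PiMap K π i)) :
    (TensorProduct.map (π : A →ₗ[K] H) (LinearMap.id : A →ₗ[K] A))
        (Coalgebra.comul (R := K) b) ∈
      LinearMap.range
        (LinearMap.lTensor H (LinearMap.range (PiMap K π i)).subtype) := by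
  obtain ⟨a, rfl⟩ := hb
  have hd := DFunLike.congr_fun (DeltaPi π i hπi) a
  simp only [LinearMap.comp_apply] at hd
  rw [hd]
  obtain r := Coalgebra.Repr.arbitrary K a
  rw [conv_apply_of_eq _ _ _ a r.index r.left r.right r.eq.symm]
  rw [map_sum]
  apply Submodule.sum_mem
  intro t _
  set st := Coalgebra.Repr.arbitrary K (r.right t)
  rw [conv_apply_of_eq _ _ _ (r.right t) st.index st.left st.right st.eq.symm]
  rw [Finset.mul_sum, map_sum]
  apply Submodule.sum_mem
  intro u _
  have term : (Algebra.TensorProduct.includeLeft (R := K) (S := K) (A := A)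
        (B := A)).toLinearMap (r.left t) *
      (((Algebra.TensorProduct.includeRight (R := K) (A := A) (B := A)).toLinearMap ∘ₗ
          PiMap K π i) (st.left u) *
        ((((Algebra.TensorProduct.includeLeft (R := K) (S := K) (A := A)
            (B := A)).toLinearMap ∘ₗ (i : H →ₗ[K] A) ∘ₗ HopfAlgebra.antipode (R := K)) ∘ₗ
          (π : A →ₗ[K] H)) (st.right u))) =
      (r.left t * (i : H →ₗ[K] A) (HopfAlgebra.antipode (R := K) (π (st.right u)))) ⊗ₜ[K]
        (PiMap K π i (st.left u)) := by
    simp [Algebra.TensorProduct.tmul_mul_tmul]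
  rw [term]
  refine ⟨(π (r.left t * (i : H →ₗ[K] A) (HopfAlgebra.antipode (R := K) (π (st.right u))))) ⊗ₜ[K]
    (⟨PiMap K π i (st.left u), ⟨st.left u, rfl⟩⟩ :
      (LinearMap.range (PiMap K π i) : Submodule K A)), ?_⟩
  simp

end HopfAux5

/-- for every `h ∈ H` and `b ∈ B = Π(A)` the adjoint action
`ad_h(b) = i(h₁) b i(κ_H(h₂))` again belongs to `B`; `ad` is a left action on `B`
(`ad_{hh'}(b) = ad_h(ad_{h'}(b))` and `ad_{1}(b) = b`); and `(π ⊗ id)(Δ(b)) ∈ H ⊗ B`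
for every `b ∈ B`. -/
theorem statement3 (K A H : Type*) [CommRing K] [Ring A] [Ring H]
    [HopfAlgebra K A] [HopfAlgebra K H]
    (π : A →ₐc[K] H) (i : H →ₐc[K] A)
    (hπi : π.comp i = BialgHom.id K H) :
    (∀ (h : H) (b : A), b ∈ LinearMap.range (PiMap K π i) →
        adAct K i h b ∈ LinearMap.range (PiMap K π i)) ∧
    (∀ (h h' : H) (b : A), b ∈ LinearMap.range (PiMap K π i) →
        adAct K i (h * h') b = adAct K i h (adAct K i h' b)) ∧
    (∀ b : A, b ∈ LinearMap.range (PiMap K π i) → adAct K i (1 : H) b = b) ∧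
    (∀ b : A, b ∈ LinearMap.range (PiMap K π i) →
        (TensorProduct.map (π : A →ₗ[K] H) (LinearMap.id : A →ₗ[K] A))
            (Coalgebra.comul (R := K) b) ∈
          LinearMap.range
            (LinearMap.lTensor H (LinearMap.range (PiMap K π i)).subtype)) :=
  ⟨fun h b hb => HopfAux5.ad_mem π i hπi h b hb,
   fun h h' b _ => HopfAux5.adAct_mul i h h' b,
   fun b _ => HopfAux5.adAct_one i b,
   fun b hb => HopfAux5.stmt4 π i hπi b hb⟩
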